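/- The group G_B × GL(W) acts transitively on 𝒪_B = {(T, X) ∈ Hom(V₁,W) × Hom(W,V₂) : X∘T = B}, where GL(W) acts by h·(T,X) = (h∘T, X∘h⁻¹) and G_B = {(g, BgB⁻¹) : g ∈ GL(V₁)} acts by (g, BgB⁻¹)·(T,X) = (T∘g⁻¹, BgB⁻¹∘X). -/

import Mathlib

open Module LinearMap

private lemma aux_pair
    {K : Type*} [Field K] {V₁ V₂ W : Type*}
    [AddCommGroup V₁] [Module K V₁] [AddCommGroup V₂] [Module K V₂]
    [AddCommGroup W] [Module K W]
    [FiniteDimensional K V₁] [FiniteDimensional K W]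
    (n : ℕ) (h1 : Module.finrank K V₁ = n)
    (hW : Module.finrank K W = 2 * n)
    (B : V₁ ≃ₗ[K] V₂)
    (T : V₁ →ₗ[K] W) (X : W →ₗ[K] V₂)
    (h : X ∘ₗ T = (B : V₁ →ₗ[K] V₂)) :
    Function.Injective T ∧ IsCompl (range T) (ker X) ∧ finrank K (ker X) = n := by
  have hXT : ∀ v, X (T v) = B v := fun v => LinearMap.congr_fun h v
  have hTinj : Function.Injective T := by
    intro a b hab
    have : B a = B b := by rw [← hXT, ← hXT, hab]
    exact B.injective this
  have hXsurj : Function.Surjective X := fun y => ⟨T (B.symm y), by rw [hXT]; simp⟩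
  have hkerX : finrank K (ker X) = n := by
    have := LinearMap.finrank_range_add_finrank_ker X
    rw [LinearMap.range_eq_top.2 hXsurj, finrank_top] at this
    have hV2 : finrank K V₂ = n := by rw [← h1]; exact (LinearEquiv.finrank_eq B).symm
    omega
  have hrT : finrank K (range T) = n := by
    rw [LinearMap.finrank_range_of_inj hTinj, h1]
  have hdisj : Disjoint (range T) (ker X) := by
    rw [Submodule.disjoint_def]
    rintro w ⟨v, rfl⟩ hw
    rw [LinearMap.mem_ker, hXT] at hw
    have : v = 0 := B.injective (by simpa using hw)
    simp [this]
  refine ⟨hTinj, ⟨hdisj, ?_⟩, hkerX⟩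
  rw [codisjoint_iff]
  apply Submodule.eq_top_of_finrank_eq
  have := Submodule.finrank_sup_add_finrank_inf_eq (range T) (ker X)
  rw [disjoint_iff.mp hdisj] at this
  simp only [finrank_bot, add_zero] at this
  omega

theorem orbit_transitive
    {K : Type*} [Field K] {V₁ V₂ W : Type*}
    [AddCommGroup V₁] [Module K V₁] [AddCommGroup V₂] [Module K V₂]
    [AddCommGroup W] [Module K W]
    [FiniteDimensional K V₁] [FiniteDimensional K V₂] [FiniteDimensional K W]
    (n : ℕ) (h1 : Module.finrank K V₁ = n) (h2 : Module.finrank K V₂ = n)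
    (hW : Module.finrank K W = 2 * n)
    (B : V₁ ≃ₗ[K] V₂)
    (T T' : V₁ →ₗ[K] W) (X X' : W →ₗ[K] V₂)
    (h : X ∘ₗ T = (B : V₁ →ₗ[K] V₂)) (h' : X' ∘ₗ T' = (B : V₁ →ₗ[K] V₂)) :
    ∃ (g : V₁ ≃ₗ[K] V₁) (hGL : W ≃ₗ[K] W),
      T' = (hGL : W →ₗ[K] W) ∘ₗ T ∘ₗ (g.symm : V₁ →ₗ[K] V₁) ∧
      X' = ((B : V₁ →ₗ[K] V₂) ∘ₗ (g : V₁ →ₗ[K] V₁) ∘ₗ (B.symm : V₂ →ₗ[K] V₁)) ∘ₗ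
              X ∘ₗ (hGL.symm : W →ₗ[K] W) := by
  obtain ⟨hTinj, hc, hk⟩ := aux_pair n h1 hW B T X h
  obtain ⟨hTinj', hc', hk'⟩ := aux_pair n h1 hW B T' X' h'
  have hXT : ∀ v, X (T v) = B v := fun v => LinearMap.congr_fun h v
  have hXT' : ∀ v, X' (T' v) = B v := fun v => LinearMap.congr_fun h' v
  -- equivalences
  let eR : range T ≃ₗ[K] range T' :=
    (LinearEquiv.ofInjective T hTinj).symm.trans (LinearEquiv.ofInjective T' hTinj')
  let eK : ker X ≃ₗ[K] ker X' := LinearEquiv.ofFinrankEq _ _ (by rw [hk, hk'])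
  let e := Submodule.prodEquivOfIsCompl _ _ hc
  let e' := Submodule.prodEquivOfIsCompl _ _ hc'
  let hGL : W ≃ₗ[K] W := e.symm.trans ((eR.prodCongr eK).trans e')
  have heR : ∀ v : V₁, (eR (⟨T v, LinearMap.mem_range_self T v⟩ : range T) : W) = T' v := by
    intro v
    simp only [eR, LinearEquiv.trans_apply]
    have : (LinearEquiv.ofInjective T hTinj).symm (⟨T v, LinearMap.mem_range_self T v⟩ : range T) = v := by
      apply hTinj
      rw [LinearEquiv.ofInjective_symm_apply]
    rw [this]
    rfl
  have hGLT : ∀ v, hGL (T v) = T' v := by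
    intro v
    have h1 : e.symm (T v) = ((⟨T v, LinearMap.mem_range_self T v⟩ : range T), 0) :=
      Submodule.prodEquivOfIsCompl_symm_apply_left _ _ hc (⟨T v, LinearMap.mem_range_self T v⟩ : range T)
    simp only [hGL, LinearEquiv.trans_apply, h1, LinearEquiv.prodCongr_apply, map_zero]
    rw [Submodule.coe_prodEquivOfIsCompl']
    simp [heR v]
  have hX'hGL : ∀ w, X' (hGL w) = X w := by
    intro w
    obtain ⟨⟨a, b⟩, rfl⟩ := e.surjective w
    have ha : (a : W) ∈ range T := a.2
    obtain ⟨v, hv⟩ := ha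
    have hea : e (a, b) = (a : W) + (b : W) := rfl
    have h2 : hGL (e (a, b)) = ((eR a : W) + (eK b : W)) := by
      simp only [hGL, LinearEquiv.trans_apply, LinearEquiv.symm_apply_apply,
        LinearEquiv.prodCongr_apply]
      rfl
    rw [h2, hea, map_add, map_add]
    have hb : X (b : W) = 0 := b.2
    have hb' : X' (eK b : W) = 0 := (eK b).2
    rw [hb, hb']
    have : a = (⟨T v, LinearMap.mem_range_self T v⟩ : range T) := Subtype.ext hv.symm
    rw [this, heR v, hXT']
    simp [← hv, hXT]
  refine ⟨LinearEquiv.refl K V₁, hGL, ?_, ?_⟩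
  · ext v; simp [hGLT v]
  · ext w
    simp only [coe_comp, Function.comp_apply, LinearEquiv.coe_coe, LinearEquiv.refl_apply,
      LinearEquiv.apply_symm_apply]
    rw [← hX'hGL (hGL.symm w), LinearEquiv.apply_symm_apply]
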